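/- Soundness of the RTD-hardness reduction: Let G = (V,E) be a finite nonempty graph, k ≥ 1, and let C be the concept class of the reduction. If RTD(C) ≤ k, then G has a dominating set of size at most k. -/

import Mathlib

/-- A set `S` is a teaching set of `c` with respect to the class `C`:
every other concept in `C` differs from `c` on some point of `S`. -/
def IsTeachingSet {X : Type*} (C : Finset (X → Bool)) (c : X → Bool) (S : Finset X) : Prop :=
  ∀ c' ∈ C, c' ≠ c → ∃ x ∈ S, c x ≠ c' x

/-- Minimum teaching set size of `c` with respect to `C`. -/
noncomputable def TS {X : Type*} (C : Finset (X → Bool)) (c : X → Bool) : ℕ :=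
  sInf {n | ∃ S : Finset X, S.card = n ∧ IsTeachingSet C c S}

/-- A teaching plan: an ordering of all concepts of `C` (as first components)
together with sets that teach each concept w.r.t. the remaining suffix. -/
def IsTeachingPlan {X : Type*} [Fintype X] [DecidableEq X]
    (C : Finset (X → Bool)) (L : List ((X → Bool) × Finset X)) : Prop :=
  (L.map Prod.fst).Nodup ∧ (L.map Prod.fst).toFinset = C ∧
  ∀ i (hi : i < L.length),
    IsTeachingSet ((L.drop i).map Prod.fst).toFinset (L.get ⟨i, hi⟩).1 (L.get ⟨i, hi⟩).2

/-- Recursive teaching dimension. -/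
noncomputable def RTD {X : Type*} [Fintype X] [DecidableEq X] (C : Finset (X → Bool)) : ℕ :=
  sInf {k | ∃ L, IsTeachingPlan C L ∧ ∀ p ∈ L, p.2.card ≤ k}

/-- The gadget class: all boolean functions on `Z` with exactly `k` ones. -/
def gadgetH (Z : Type*) [Fintype Z] [DecidableEq Z] (k : ℕ) : Finset (Z → Bool) :=
  Finset.univ.filter fun h => (Finset.univ.filter fun z => h z = true).card = k

/-- The concept `c_h` of the reduction: all-one on `Z × V`, `h(z)` on `V × Z`. -/
def cH {V Z : Type*} (h : Z → Bool) : (V × Z) ⊕ (Z × V) → Bool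
  | Sum.inl p => h p.2
  | Sum.inr _ => true

/-- The concept `c_{u,h}` of the reduction. -/
def cUH {V Z : Type*} [DecidableEq V] (G : SimpleGraph V) [DecidableRel G.Adj]
    (u : V) (h : Z → Bool) : (V × Z) ⊕ (Z × V) → Bool
  | Sum.inl p => !decide (p.1 = u ∨ G.Adj u p.1)
  | Sum.inr p => h p.1 && decide (u = p.2)

/-- The full concept class of the reduction. -/
noncomputable def redC {V Z : Type*} [Fintype V] [DecidableEq V] [Fintype Z] [DecidableEq Z]
    (G : SimpleGraph V) [DecidableRel G.Adj] (k : ℕ) :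
    Finset (((V × Z) ⊕ (Z × V)) → Bool) :=
  (gadgetH Z k).image (cH (V := V)) ∪
    ((Finset.univ : Finset V) ×ˢ gadgetH Z k).image fun p => cUH G p.1 p.2

lemma exists_plan {X : Type*} [Fintype X] [DecidableEq X] (C : Finset (X → Bool)) :
    ∃ L, IsTeachingPlan C L ∧ ∀ p ∈ L, p.2.card ≤ Fintype.card X := by
  have hmf : List.map Prod.fst (C.toList.map (fun c => (c, (Finset.univ : Finset X)))) =
      C.toList := by
    rw [List.map_map]
    exact List.map_id'' (fun x => rfl) _
  refine ⟨C.toList.map (fun c => (c, (Finset.univ : Finset X))), ⟨?_, ?_, ?_⟩, ?_⟩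
  · rw [hmf]; exact C.nodup_toList
  · rw [hmf]; exact Finset.toList_toFinset C
  · intro i hi c' _ hne
    obtain ⟨x, hx⟩ := Function.ne_iff.mp (Ne.symm hne)
    refine ⟨x, ?_, hx⟩
    simp
  · intro p hp
    simp only [List.mem_map] at hp
    obtain ⟨c, -, rfl⟩ := hp
    simp

lemma gadget_ne {Z : Type*} [Fintype Z] [DecidableEq Z] {k : ℕ}
    (hZ : Fintype.card Z = 2 * k + 1) : (gadgetH Z k).Nonempty := by
  obtain ⟨A, -, hA⟩ := Finset.exists_subset_card_eq (s := (Finset.univ : Finset Z)) (n := k)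
    (by rw [Finset.card_univ, hZ]; omega)
  refine ⟨fun z => decide (z ∈ A), ?_⟩
  simp only [gadgetH, Finset.mem_filter, Finset.mem_univ, true_and, decide_eq_true_eq]
  rwa [Finset.filter_univ_mem]

lemma pin {Z : Type*} [Fintype Z] [DecidableEq Z] {k : ℕ} (hZ : Fintype.card Z = 2 * k + 1)
    {h : Z → Bool} (hh : h ∈ gadgetH Z k) {SZ : Finset Z} (hcard : SZ.card ≤ k)
    (hdist : ∀ h' ∈ gadgetH Z k, h' ≠ h → ∃ z ∈ SZ, h z ≠ h' z) :
    SZ = Finset.univ.filter (fun z => h z = true) := by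
  classical
  have hOcard : (Finset.univ.filter (fun z => h z = true)).card = k := by
    simpa [gadgetH] using hh
  have hsub : Finset.univ.filter (fun z => h z = true) ⊆ SZ := by
    intro z0 hz0
    by_contra hz0n
    have hz0true : h z0 = true := (Finset.mem_filter.mp hz0).2
    have hzeros : (Finset.univ.filter (fun z => h z = false)).card = k + 1 := by
      have hc := Finset.card_filter_add_card_filter_not
        (s := (Finset.univ : Finset Z)) (p := fun z => h z = true)
      have : (Finset.univ.filter (fun z => ¬ h z = true)) =
          (Finset.univ.filter (fun z => h z = false)) := by
        apply Finset.filter_congr; intro z _; simp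
      rw [this, Finset.card_univ, hZ] at hc
      omega
    have hnsub : ¬ (Finset.univ.filter (fun z => h z = false)) ⊆ SZ := by
      intro hs
      have := Finset.card_le_card hs
      omega
    obtain ⟨z1, hz1mem, hz1n⟩ := Finset.not_subset.mp hnsub
    have hz1false : h z1 = false := (Finset.mem_filter.mp hz1mem).2
    have hz10 : z1 ≠ z0 := by intro e; rw [e, hz0true] at hz1false; exact Bool.noConfusion hz1false
    set h' : Z → Bool := fun z => if z = z0 then false else if z = z1 then true else h z with hh'def
    have hz0O : z0 ∈ Finset.univ.filter (fun z => h z = true) := hz0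
    have hOnes' : Finset.univ.filter (fun z => h' z = true) =
        insert z1 ((Finset.univ.filter (fun z => h z = true)).erase z0) := by
      ext z
      by_cases h1 : z = z0
      · subst h1
        simp [hh'def, hz10.symm]
      · by_cases h2 : z = z1
        · subst h2
          simp [hh'def, h1]
        · simp [hh'def, h1, h2]
    have hz1ne : z1 ∉ (Finset.univ.filter (fun z => h z = true)).erase z0 := by
      intro hm
      have := (Finset.mem_filter.mp (Finset.mem_of_mem_erase hm)).2
      rw [hz1false] at this; exact Bool.noConfusion this
    have hk1 : 1 ≤ k := by
      have := Finset.card_pos.mpr ⟨z0, hz0O⟩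
      omega
    have h'mem : h' ∈ gadgetH Z k := by
      simp only [gadgetH, Finset.mem_filter, Finset.mem_univ, true_and]
      rw [hOnes', Finset.card_insert_of_notMem hz1ne, Finset.card_erase_of_mem hz0O, hOcard]
      omega
    have h'ne : h' ≠ h := by
      intro he
      have := congrFun he z0
      rw [hz0true] at this
      simp [hh'def] at this
    obtain ⟨z, hzS, hzne⟩ := hdist h' h'mem h'ne
    have hzz0 : z ≠ z0 := by intro e; rw [e] at hzS; exact hz0n hzS
    have hzz1 : z ≠ z1 := by intro e; rw [e] at hzS; exact hz1n hzS
    apply hzne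
    simp [hh'def, hzz0, hzz1]
  exact (Finset.eq_of_subset_of_card_le hsub (by omega)).symm

def projZ {V Z : Type*} : (V × Z) ⊕ (Z × V) → Z :=
  Sum.elim (fun p => p.2) (fun p => p.1)

noncomputable def projV {V Z : Type*} [Nonempty V] : (V × Z) ⊕ (Z × V) → V :=
  Sum.elim (fun p => p.1) (fun _ => Classical.arbitrary V)

theorem stmt14 {V Z : Type*} [Fintype V] [DecidableEq V] [Fintype Z] [DecidableEq Z]
    [Nonempty V] (G : SimpleGraph V) [DecidableRel G.Adj]
    (k : ℕ) (hk : 1 ≤ k) (hZ : Fintype.card Z = 2 * k + 1)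
    (hRTD : RTD (redC (Z := Z) G k) ≤ k) :
    ∃ T : Finset V, T.card ≤ k ∧ ∀ u : V, ∃ v ∈ T, v = u ∨ G.Adj u v := by
  classical
  -- extract a teaching plan with bound k
  obtain ⟨Lt, hLt, hLtb⟩ := exists_plan (redC (Z := Z) G k)
  have hmem : RTD (redC (Z := Z) G k) ∈
      {m | ∃ L, IsTeachingPlan (redC (Z := Z) G k) L ∧ ∀ p ∈ L, p.2.card ≤ m} :=
    Nat.sInf_mem ⟨_, Lt, hLt, hLtb⟩
  obtain ⟨L, ⟨hnodup, htofin, hteach⟩, hbound⟩ := hmem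
  have hbound' : ∀ p ∈ L, p.2.card ≤ k := fun p hp => le_trans (hbound p hp) hRTD
  obtain ⟨h0, hh0⟩ := gadget_ne (k := k) hZ
  have hlen : 0 < L.length := by
    rcases L with _ | ⟨p, L'⟩
    · exfalso
      have hmem0 : cH (V := V) h0 ∈ (List.map Prod.fst ([] : List ((((V × Z) ⊕ (Z × V)) → Bool) × Finset ((V × Z) ⊕ (Z × V))))).toFinset := by
        rw [htofin]
        exact Finset.mem_union_left _ (Finset.mem_image_of_mem _ hh0)
      simp at hmem0
    · simp
  set c0 := (L.get ⟨0, hlen⟩).1 with hc0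
  set S := (L.get ⟨0, hlen⟩).2 with hSdef
  have hScard : S.card ≤ k := hbound' _ (L.get_mem _)
  have hteach0 : IsTeachingSet (redC (Z := Z) G k) c0 S := by
    have := hteach 0 hlen
    rwa [List.drop_zero, htofin] at this
  have hc0mem : c0 ∈ redC (Z := Z) G k := by
    rw [← htofin]
    exact List.mem_toFinset.mpr (List.mem_map_of_mem (f := Prod.fst) (L.get_mem _))
  rcases Finset.mem_union.mp hc0mem with hcase | hcase
  · -- c0 = cH h
    obtain ⟨h, hh, hch⟩ := Finset.mem_image.mp hcase
    set Sl := S.filter (fun x => x.isLeft = true) with hSl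
    set SZ := Sl.image projZ with hSZ
    have hSZcard : SZ.card ≤ k :=
      le_trans Finset.card_image_le (le_trans (Finset.card_filter_le _ _) hScard)
    have hdist : ∀ h' ∈ gadgetH Z k, h' ≠ h → ∃ z ∈ SZ, h z ≠ h' z := by
      intro h' hh' hne
      have hne' : cH (V := V) h' ≠ c0 := by
        rw [← hch]
        intro he
        obtain ⟨z, hz⟩ := Function.ne_iff.mp hne
        have := congrFun he (Sum.inl (Classical.arbitrary V, z))
        simp [cH] at this
        exact hz this
      obtain ⟨x, hxS, hxd⟩ :=
        hteach0 _ (Finset.mem_union_left _ (Finset.mem_image_of_mem _ hh')) hne'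
      rw [← hch] at hxd
      rcases x with ⟨v, z⟩ | ⟨z, v⟩
      · refine ⟨z, ?_, ?_⟩
        · have hmemSl : Sum.inl (v, z) ∈ Sl := Finset.mem_filter.mpr ⟨hxS, rfl⟩
          exact Finset.mem_image_of_mem projZ hmemSl
        · simpa [cH] using hxd
      · simp [cH] at hxd
    have hSZO := pin hZ hh hSZcard hdist
    have hOcard : (Finset.univ.filter (fun z => h z = true)).card = k := by
      simpa [gadgetH] using hh
    have hkSl : k ≤ Sl.card := by
      have h1 : SZ.card ≤ Sl.card := Finset.card_image_le
      rw [hSZO, hOcard] at h1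
      exact h1
    have hSlS : Sl = S :=
      Finset.eq_of_subset_of_card_le (Finset.filter_subset _ _)
        (le_trans hScard hkSl)
    have hmemS : ∀ x ∈ S, ∃ v z, x = Sum.inl (v, z) ∧ h z = true := by
      intro x hxS
      have hxSl : x ∈ Sl := hSlS ▸ hxS
      have hleft := (Finset.mem_filter.mp hxSl).2
      rcases x with ⟨v, z⟩ | ⟨z, v⟩
      · refine ⟨v, z, rfl, ?_⟩
        have hz : projZ (Sum.inl (v, z)) ∈ SZ := Finset.mem_image_of_mem projZ hxSl
        rw [hSZO] at hz
        simpa [projZ] using (Finset.mem_filter.mp hz).2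
      · simp at hleft
    refine ⟨S.image projV, le_trans Finset.card_image_le hScard, ?_⟩
    intro u
    by_contra hcon
    push_neg at hcon
    have hSne : S.Nonempty := by
      rw [← hSlS]
      exact Finset.card_pos.mp (by omega)
    obtain ⟨x0, hx0⟩ := hSne
    obtain ⟨v0, z0, rfl, hz0⟩ := hmemS x0 hx0
    have hv0T : v0 ∈ S.image projV := Finset.mem_image_of_mem projV hx0
    have hv0 := hcon v0 hv0T
    have hc'mem : cUH G u h ∈ redC (Z := Z) G k := by
      refine Finset.mem_union_right _ (Finset.mem_image.mpr ⟨(u, h), ?_, rfl⟩)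
      exact Finset.mem_product.mpr ⟨Finset.mem_univ _, hh⟩
    have hne' : cUH G u h ≠ c0 := by
      rw [← hch]
      intro he
      have := congrFun he (Sum.inr (z0, v0))
      simp [cUH, cH, hz0] at this
      exact hv0.1 this.symm
    obtain ⟨x, hxS, hxd⟩ := hteach0 _ hc'mem hne'
    obtain ⟨v, z, rfl, hz⟩ := hmemS x hxS
    have hvT : v ∈ S.image projV := Finset.mem_image_of_mem projV hxS
    have hv := hcon v hvT
    rw [← hch] at hxd
    simp [cH, cUH, hz, hv.1, hv.2] at hxd
  · -- c0 = cUH u h : derive a contradiction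
    exfalso
    obtain ⟨⟨u, h⟩, huh, hch⟩ := Finset.mem_image.mp hcase
    have hh : h ∈ gadgetH Z k := (Finset.mem_product.mp huh).2
    set Sr := S.filter (fun x => x = Sum.inr (projZ x, u)) with hSr
    set SZ := Sr.image projZ with hSZ
    have hSZcard : SZ.card ≤ k :=
      le_trans Finset.card_image_le (le_trans (Finset.card_filter_le _ _) hScard)
    have hdist : ∀ h' ∈ gadgetH Z k, h' ≠ h → ∃ z ∈ SZ, h z ≠ h' z := by
      intro h' hh' hne
      have hc'mem : cUH G u h' ∈ redC (Z := Z) G k := by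
        refine Finset.mem_union_right _ (Finset.mem_image.mpr ⟨(u, h'), ?_, rfl⟩)
        exact Finset.mem_product.mpr ⟨Finset.mem_univ _, hh'⟩
      have hne' : cUH G u h' ≠ c0 := by
        rw [← hch]
        intro he
        obtain ⟨z, hz⟩ := Function.ne_iff.mp hne
        have := congrFun he (Sum.inr (z, u))
        simp [cUH] at this
        exact hz this
      obtain ⟨x, hxS, hxd⟩ := hteach0 _ hc'mem hne'
      rw [← hch] at hxd
      rcases x with ⟨v, z⟩ | ⟨z, v⟩
      · simp [cUH] at hxd
      · have huv : u = v := by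
          by_contra huv
          simp [cUH, huv] at hxd
        subst huv
        refine ⟨z, ?_, ?_⟩
        · have hmemSr : Sum.inr (z, u) ∈ Sr := Finset.mem_filter.mpr ⟨hxS, rfl⟩
          exact Finset.mem_image_of_mem projZ hmemSr
        · simpa [cUH] using hxd
    have hSZO := pin hZ hh hSZcard hdist
    have hOcard : (Finset.univ.filter (fun z => h z = true)).card = k := by
      simpa [gadgetH] using hh
    have hkSr : k ≤ Sr.card := by
      have h1 : SZ.card ≤ Sr.card := Finset.card_image_le
      rw [hSZO, hOcard] at h1
      exact h1
    have hSrS : Sr = S :=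
      Finset.eq_of_subset_of_card_le (Finset.filter_subset _ _)
        (le_trans hScard hkSr)
    have hmemS : ∀ x ∈ S, ∃ z, x = Sum.inr (z, u) ∧ h z = true := by
      intro x hxS
      have hxSr : x ∈ Sr := hSrS ▸ hxS
      have hr := (Finset.mem_filter.mp hxSr).2
      rcases x with ⟨v, z⟩ | ⟨z, v⟩
      · simp [projZ] at hr
      · have hvu : v = u := by simpa [projZ] using hr
        subst hvu
        refine ⟨z, rfl, ?_⟩
        have hz : projZ (Sum.inr (z, v)) ∈ SZ := Finset.mem_image_of_mem projZ hxSr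
        rw [hSZO] at hz
        simpa [projZ] using (Finset.mem_filter.mp hz).2
    obtain ⟨z1, hz1⟩ : ∃ z1, h z1 = false := by
      by_contra hall
      push_neg at hall
      have hOu : (Finset.univ.filter (fun z => h z = true)) = Finset.univ := by
        apply Finset.eq_univ_iff_forall.mpr
        intro z
        simp only [Finset.mem_filter, Finset.mem_univ, true_and]
        exact Bool.ne_false_iff.mp (hall z)
      rw [hOu, Finset.card_univ, hZ] at hOcard
      omega
    have hc'mem : cH (V := V) h ∈ redC (Z := Z) G k :=
      Finset.mem_union_left _ (Finset.mem_image_of_mem _ hh)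
    have hne' : cH (V := V) h ≠ c0 := by
      rw [← hch]
      intro he
      have := congrFun he (Sum.inr (z1, u))
      simp [cH, cUH, hz1] at this
    obtain ⟨x, hxS, hxd⟩ := hteach0 _ hc'mem hne'
    obtain ⟨z, rfl, hz⟩ := hmemS x hxS
    rw [← hch] at hxd
    simp [cH, cUH, hz] at hxd
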